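/- The integrator TI2 satisfies all requirements of Assumption A1 except the last one. Let b̄₁(ξ²) = ½ sinc(ξ) sinc(ξ/2) and b₁(ξ²) = sinc(ξ) cos(ξ/2). Then: (i) the symmetry condition sinc(ξ) b₁(ξ²) = (1 + cos ξ) b̄₁(ξ²) holds for all ξ ≥ 0; (ii) there exists c > 0 such that for all ξ ≥ 0: |ξ b̄₁(ξ²)| ≤ c, |ξ² b̄₁(ξ²)| ≤ c, |b̄₁(ξ²) − ½ sinc(ξ/2)| ≤ c ξ, |ξ b₁(ξ²)| ≤ c, and |b₁(ξ²) − cos(ξ/2)| ≤ c ξ²; but (iii) the function ξ ↦ ξ b₁(ξ²)/sinc(ξ) = ξ cos(ξ/2) is unbounded on the set {ξ ≥ 0 : sinc(ξ) ≠ 0}, so no constant c satisfies the last inequality of Assumption A1. -/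

import Mathlib

open scoped Real
open Complex

noncomputable section

/-- `⟨j⟩ = √(j²+1)`. -/
def brk (j : ℤ) : ℝ := Real.sqrt ((j : ℝ) ^ 2 + 1)

/-- `sinc ξ = sin ξ / ξ`, `sinc 0 = 1`. -/
def sinc (x : ℝ) : ℝ := if x = 0 then 1 else Real.sin x / x

/-- Fourier coefficient of a 2π-periodic real-valued function. -/
def fcoeff (u : ℝ → ℝ) (j : ℤ) : ℂ :=
  (1 / (2 * Real.pi) : ℂ) *
    ∫ x in (0 : ℝ)..(2 * Real.pi), (u x : ℂ) * Complex.exp (-Complex.I * (j : ℂ) * (x : ℂ))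

/-- Squared Sobolev norm `‖u‖_s²`. -/
def sobNormSq (s : ℝ) (u : ℝ → ℝ) : ℝ :=
  ∑' j : ℤ, brk j ^ (2 * s) * ‖fcoeff u j‖ ^ 2

/-- Sobolev norm `‖u‖_s`. -/
def sobNorm (s : ℝ) (u : ℝ → ℝ) : ℝ := Real.sqrt (sobNormSq s u)

/-- Membership in `H^s` (2π-periodic with finite Sobolev norm of order `s`). -/
def memHs (s : ℝ) (u : ℝ → ℝ) : Prop :=
  Function.Periodic u (2 * Real.pi) ∧
    Summable fun j : ℤ => brk j ^ (2 * s) * ‖fcoeff u j‖ ^ 2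

/-- Norm `⦀(u,u̇)⦀_s = (‖u‖_{s+1}² + ‖u̇‖_s²)^{1/2}` of a pair. -/
def pairNorm (s : ℝ) (U : (ℝ → ℝ) × (ℝ → ℝ)) : ℝ :=
  Real.sqrt (sobNorm (s + 1) U.1 ^ 2 + sobNorm s U.2 ^ 2)

/-- Membership of a pair in `H^{s+1} × H^s`. -/
def memPair (s : ℝ) (U : (ℝ → ℝ) × (ℝ → ℝ)) : Prop :=
  memHs (s + 1) U.1 ∧ memHs s U.2

/-- Scalar product `⟨v,w⟩_s`. -/
def sobInner (s : ℝ) (v w : ℝ → ℝ) : ℝ :=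
  (∑' j : ℤ, ((brk j ^ (2 * s) : ℝ) : ℂ) * (starRingEnd ℂ (fcoeff v j) * fcoeff w j)).re

/-- Fourier multiplier with symbol `ψ(⟨j⟩)`. -/
def fmul (ψ : ℝ → ℝ) (u : ℝ → ℝ) : ℝ → ℝ := fun x =>
  (∑' j : ℤ, (ψ (brk j) : ℂ) * fcoeff u j * Complex.exp (Complex.I * (j : ℂ) * (x : ℂ))).re

/-- Quasilinear nonlinearity `f(u) = a(u) ∂ₓ²u`. -/
def fQL (a : ℝ → ℝ) (u : ℝ → ℝ) : ℝ → ℝ := fun x => a (u x) * deriv (deriv u) x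

/-- Full nonlinearity `f(u) = a(u) ∂ₓ²u + g(u, ∂ₓu)`. -/
def fFull (a : ℝ → ℝ) (g : ℝ → ℝ → ℝ) (u : ℝ → ℝ) : ℝ → ℝ := fun x =>
  a (u x) * deriv (deriv u) x + g (u x) (deriv u x)

/-- Internal stage `u_{n+1/2} = cos(½hΩ)uₙ + ½h sinc(½hΩ)u̇ₙ`. -/
def tiHalf (h : ℝ) (U : (ℝ → ℝ) × (ℝ → ℝ)) : ℝ → ℝ := fun x =>
  fmul (fun ξ => Real.cos (h / 2 * ξ)) U.1 x + fmul (fun ξ => h / 2 * sinc (h / 2 * ξ)) U.2 x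

/-- One step of the one-stage explicit trigonometric integrator with stepsize `h`,
parameter `κ`, nonlinearity `F` and coefficient functions `b1 ξ = b₁(ξ²)`,
`bb1 ξ = b̄₁(ξ²)` (so that `b₁(V)` is the multiplier with symbol `b1 (h⟨j⟩)`). -/
def tiStep (b1 bb1 : ℝ → ℝ) (h κ : ℝ) (F : (ℝ → ℝ) → ℝ → ℝ)
    (U : (ℝ → ℝ) × (ℝ → ℝ)) : (ℝ → ℝ) × (ℝ → ℝ) :=
  (fun x =>
      fmul (fun ξ => Real.cos (h * ξ)) U.1 x + fmul (fun ξ => h * sinc (h * ξ)) U.2 x +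
        κ * h ^ 2 * fmul (fun ξ => bb1 (h * ξ)) (F (tiHalf h U)) x,
   fun x =>
      fmul (fun ξ => -(ξ * Real.sin (h * ξ))) U.1 x + fmul (fun ξ => Real.cos (h * ξ)) U.2 x +
        κ * h * fmul (fun ξ => b1 (h * ξ)) (F (tiHalf h U)) x)

/-- Assumption A1 on the coefficient functions, with constant `c`. -/
def AssumptionA1 (b1 bb1 : ℝ → ℝ) (c : ℝ) : Prop :=
  (∀ ξ : ℝ, 0 ≤ ξ → sinc ξ * b1 ξ = (1 + Real.cos ξ) * bb1 ξ) ∧ 0 < c ∧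
    ∀ ξ : ℝ, 0 ≤ ξ →
      |ξ * bb1 ξ| ≤ c ∧ |ξ ^ 2 * bb1 ξ| ≤ c ∧ |bb1 ξ - 1 / 2 * sinc (ξ / 2)| ≤ c * ξ ∧
        |ξ * b1 ξ| ≤ c ∧ |b1 ξ - Real.cos (ξ / 2)| ≤ c * ξ ^ 2 ∧
          (sinc ξ ≠ 0 → |ξ * b1 ξ / sinc ξ| ≤ c)

/-- Time derivative `∂ₜu(·,t)` of a space-time function. -/
def udot (u : ℝ → ℝ → ℝ) (t : ℝ) : ℝ → ℝ := fun x => deriv (fun τ => u τ x) t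

/-- `u` solves `∂ₜ²u = ∂ₓ²u − u + κ a(u)∂ₓ²u + κ g(u,∂ₓu)` on `[0,T]`,
2π-periodic in space. -/
def IsExactSol (κ : ℝ) (a : ℝ → ℝ) (g : ℝ → ℝ → ℝ) (T : ℝ) (u : ℝ → ℝ → ℝ) : Prop :=
  (∀ t x : ℝ, u t (x + 2 * Real.pi) = u t x) ∧
    ∀ t ∈ Set.Icc (0 : ℝ) T, ∀ x : ℝ,
      deriv (deriv (fun τ => u τ x)) t =
        deriv (deriv (u t)) x - u t x + κ * a (u t x) * deriv (deriv (u t)) x +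
          κ * g (u t x) (deriv (u t) x)

/-- Assumption A2 with parameter `s`, bound `M`, on `[0,T]`. -/
def AssumptionA2 (κ : ℝ) (a : ℝ → ℝ) (s M T : ℝ) (u : ℝ → ℝ → ℝ) : Prop :=
  (∀ t ∈ Set.Icc (0 : ℝ) T,
      memHs (5 + s) (u t) ∧ memHs (4 + s) (udot u t) ∧
        pairNorm (4 + s) (u t, udot u t) ≤ M) ∧
    ∃ δ A₀ : ℝ, 0 < δ ∧ δ < 1 ∧ 0 ≤ A₀ ∧
      ∀ t ∈ Set.Icc (0 : ℝ) T, ∀ x : ℝ,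
        δ ≤ 1 + κ * a (u t x) ∧ κ * a (u t x) ≤ A₀

/-- The `L²`-orthogonal projection `𝒫^K` onto trigonometric polynomials of degree `≤ K`. -/
def projK (K : ℕ) (u : ℝ → ℝ) : ℝ → ℝ := fun x =>
  (∑ j ∈ Finset.Icc (-(K : ℤ)) (K : ℤ),
      fcoeff u j * Complex.exp (Complex.I * (j : ℂ) * (x : ℂ))).re

/-- Coefficients of trigonometric interpolation in the `2K+1` equidistant points. -/
def interpCoeff (K : ℕ) (u : ℝ → ℝ) (j : ℤ) : ℂ :=
  (1 / (2 * (K : ℂ) + 1)) *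
    ∑ k ∈ Finset.range (2 * K + 1),
      ((u (2 * Real.pi * (k : ℝ) / (2 * (K : ℝ) + 1)) : ℝ) : ℂ) *
        Complex.exp (-Complex.I * (j : ℂ) * ((2 * Real.pi * (k : ℝ) / (2 * (K : ℝ) + 1) : ℝ) : ℂ))

/-- Trigonometric interpolation `ℐ^K`. -/
def interpK (K : ℕ) (u : ℝ → ℝ) : ℝ → ℝ := fun x =>
  (∑ j ∈ Finset.Icc (-(K : ℤ)) (K : ℤ),
      interpCoeff K u j * Complex.exp (Complex.I * (j : ℂ) * (x : ℂ))).re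

/-- `f̂^K(u) = 𝒫^K(a^K(u) ∂ₓ²u)` with `a^K = ℐ^K ∘ a` (quasilinear case). -/
def fhatK (K : ℕ) (a : ℝ → ℝ) (u : ℝ → ℝ) : ℝ → ℝ :=
  projK K fun x => interpK K (fun y => a (u y)) x * deriv (deriv u) x

/-- `f̂^K(u) = 𝒫^K(a^K(u) ∂ₓ²u + g^K(u,∂ₓu))` with `a^K = ℐ^K∘a`, `g^K = ℐ^K∘g`. -/
def fhatFullK (K : ℕ) (a : ℝ → ℝ) (g : ℝ → ℝ → ℝ) (u : ℝ → ℝ) : ℝ → ℝ :=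
  projK K fun x =>
    interpK K (fun y => a (u y)) x * deriv (deriv u) x +
      interpK K (fun y => g (u y) (deriv u y)) x

/-- Membership in the space `𝒱^K` of trigonometric polynomials of degree `≤ K`. -/
def memVK (K : ℕ) (v : ℝ → ℝ) : Prop :=
  ∃ c : ℤ → ℂ, ∀ x : ℝ,
    v x = (∑ j ∈ Finset.Icc (-(K : ℤ)) (K : ℤ),
        c j * Complex.exp (Complex.I * (j : ℂ) * (x : ℂ))).re

/-- The linear flow `Φ_{t,L}`. -/
def PhiL (t : ℝ) (U : (ℝ → ℝ) × (ℝ → ℝ)) : (ℝ → ℝ) × (ℝ → ℝ) :=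
  (fun x => fmul (fun ξ => Real.cos (t * ξ)) U.1 x + fmul (fun ξ => t * sinc (t * ξ)) U.2 x,
   fun x => fmul (fun ξ => -(ξ * Real.sin (t * ξ))) U.1 x + fmul (fun ξ => Real.cos (t * ξ)) U.2 x)

/-- The nonlinear flow `Φ_{t,NL}` (the multiplier `Υ(hΩ)` is built with the full stepsize `h`). -/
def PhiNL (t h : ℝ) (Y : ℝ → ℝ) (N : (ℝ → ℝ) → ℝ → ℝ) (U : (ℝ → ℝ) × (ℝ → ℝ)) :
    (ℝ → ℝ) × (ℝ → ℝ) :=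
  (U.1, fun x => U.2 x + t * fmul (fun ξ => Y (h * ξ)) (N U.1) x)

/-- The integrator TI2, with `b̄₁(ξ²) = ½ sinc(ξ) sinc(ξ/2)` and
`b₁(ξ²) = sinc(ξ) cos(ξ/2)`, satisfies all requirements of Assumption A1 except the
last one: (i) the symmetry condition holds; (ii) the first five bounds hold with some
`c > 0`; (iii) `ξ b₁(ξ²)/sinc ξ = ξ cos(ξ/2)` wherever `sinc ξ ≠ 0`, this function is
unbounded on `{ξ ≥ 0 : sinc ξ ≠ 0}`, and no constant satisfies the last inequality. -/
lemma sinc_eq_half (ξ : ℝ) : sinc ξ = Real.cos (ξ / 2) * sinc (ξ / 2) := by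
  unfold sinc
  by_cases h : ξ = 0
  · simp [h]
  · have h2 : ξ / 2 ≠ 0 := by positivity
    simp only [h, h2, if_false]
    have : Real.sin ξ = 2 * Real.sin (ξ / 2) * Real.cos (ξ / 2) := by
      have := Real.sin_two_mul (ξ / 2)
      rw [show 2 * (ξ / 2) = ξ by ring] at this
      linarith
    rw [this]; field_simp

lemma abs_sinc_le_one (x : ℝ) : |sinc x| ≤ 1 := by
  unfold sinc
  by_cases h : x = 0
  · simp [h]
  · simp only [h, if_false, abs_div]
    rw [div_le_one (abs_pos.mpr h)]
    exact Real.abs_sin_le_abs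

lemma abs_mul_sinc_le (x : ℝ) : |x * sinc x| ≤ 1 := by
  unfold sinc
  by_cases h : x = 0
  · simp [h]
  · simp only [h, if_false]
    rw [mul_div_cancel₀ _ h, abs_le]
    exact ⟨Real.neg_one_le_sin x, Real.sin_le_one x⟩

lemma abs_sinc_sub_one (x : ℝ) (hx : 0 ≤ x) : |sinc x - 1| ≤ 2 * x ^ 2 := by
  rcases eq_or_lt_of_le hx with h0 | h0
  · simp [← h0, sinc]
  rcases le_or_gt x 1 with h1 | h1
  · have hs : x - x ^ 3 / 4 < Real.sin x := by
      have := Real.sin_gt_sub_cube h0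
      linarith [pow_pos h0 3]
    have hs2 : Real.sin x ≤ x := Real.sin_le hx
    unfold sinc
    simp only [ne_of_gt h0, if_false]
    rw [abs_le]
    constructor
    · rw [div_sub' (ne_of_gt h0), le_div_iff₀ h0]
      nlinarith
    · rw [div_sub' (ne_of_gt h0), div_le_iff₀ h0]
      nlinarith
  · have := abs_sinc_le_one x
    have h2 : |sinc x - 1| ≤ |sinc x| + 1 := by
      calc |sinc x - 1| ≤ |sinc x| + |(1:ℝ)| := abs_sub _ _
        _ = |sinc x| + 1 := by rw [abs_one]
    nlinarith

theorem TI2_almost_A1 :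
    (∀ ξ : ℝ, 0 ≤ ξ →
        sinc ξ * (sinc ξ * Real.cos (ξ / 2)) =
          (1 + Real.cos ξ) * (1 / 2 * (sinc ξ * sinc (ξ / 2)))) ∧
      (∃ c : ℝ, 0 < c ∧ ∀ ξ : ℝ, 0 ≤ ξ →
          |ξ * (1 / 2 * (sinc ξ * sinc (ξ / 2)))| ≤ c ∧
            |ξ ^ 2 * (1 / 2 * (sinc ξ * sinc (ξ / 2)))| ≤ c ∧
              |1 / 2 * (sinc ξ * sinc (ξ / 2)) - 1 / 2 * sinc (ξ / 2)| ≤ c * ξ ∧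
                |ξ * (sinc ξ * Real.cos (ξ / 2))| ≤ c ∧
                  |sinc ξ * Real.cos (ξ / 2) - Real.cos (ξ / 2)| ≤ c * ξ ^ 2) ∧
      (∀ ξ : ℝ, sinc ξ ≠ 0 →
        ξ * (sinc ξ * Real.cos (ξ / 2)) / sinc ξ = ξ * Real.cos (ξ / 2)) ∧
      (∀ c : ℝ, ∃ ξ : ℝ, 0 ≤ ξ ∧ sinc ξ ≠ 0 ∧
        c < |ξ * (sinc ξ * Real.cos (ξ / 2)) / sinc ξ|) ∧
      ¬∃ c : ℝ, ∀ ξ : ℝ, 0 ≤ ξ → sinc ξ ≠ 0 →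
        |ξ * (sinc ξ * Real.cos (ξ / 2)) / sinc ξ| ≤ c := by
  have hdiv : ∀ ξ : ℝ, sinc ξ ≠ 0 →
      ξ * (sinc ξ * Real.cos (ξ / 2)) / sinc ξ = ξ * Real.cos (ξ / 2) := by
    intro ξ h
    field_simp
  have hunb : ∀ c : ℝ, ∃ ξ : ℝ, 0 ≤ ξ ∧ sinc ξ ≠ 0 ∧
      c < |ξ * (sinc ξ * Real.cos (ξ / 2)) / sinc ξ| := by
    intro c
    obtain ⟨n, hn⟩ := exists_nat_gt c
    set ξ : ℝ := π / 3 + (2 * n) * (2 * π) with hξ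
    clear_value ξ
    have hπ := Real.pi_gt_three
    have hξpos : 0 < ξ := by rw [hξ]; positivity
    have hsin : Real.sin ξ = Real.sin (π / 3) := by
      rw [hξ]
      have := Real.sin_add_nat_mul_two_pi (π / 3) (2 * n)
      push_cast at this ⊢
      convert this using 2
    have hsinpos : 0 < Real.sin ξ := by
      rw [hsin, Real.sin_pi_div_three]; positivity
    have hsnz : sinc ξ ≠ 0 := by
      unfold sinc
      simp only [ne_of_gt hξpos, if_false]
      positivity
    refine ⟨ξ, le_of_lt hξpos, hsnz, ?_⟩
    rw [hdiv ξ hsnz]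
    have hcos : Real.cos (ξ / 2) = Real.cos (π / 6) := by
      have : ξ / 2 = π / 6 + n * (2 * π) := by rw [hξ]; push_cast; ring
      rw [this, Real.cos_add_nat_mul_two_pi]
    have hcos2 : Real.cos (ξ / 2) = Real.sqrt 3 / 2 := by
      rw [hcos, Real.cos_pi_div_six]
    have h3 : (1:ℝ) ≤ Real.sqrt 3 := by
      rw [show (1:ℝ) = Real.sqrt 1 by simp]
      exact Real.sqrt_le_sqrt (by norm_num)
    have hge : ξ / 2 ≤ ξ * Real.cos (ξ / 2) := by
      rw [hcos2]
      have h := mul_le_mul_of_nonneg_left h3 hξpos.le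
      calc ξ / 2 = ξ * 1 / 2 := by ring
        _ ≤ ξ * Real.sqrt 3 / 2 := by linarith
        _ = ξ * (Real.sqrt 3 / 2) := by ring
    have hn' : c < ξ / 2 := by
      have hn0 : (0:ℝ) ≤ n := Nat.cast_nonneg n
      have : (n:ℝ) ≤ ξ / 2 := by rw [hξ]; nlinarith
      linarith
    calc c < ξ / 2 := hn'
      _ ≤ ξ * Real.cos (ξ / 2) := hge
      _ ≤ |ξ * Real.cos (ξ / 2)| := le_abs_self _
  refine ⟨?_, ?_, hdiv, hunb, ?_⟩
  · intro ξ _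
    have hc : Real.cos ξ = 2 * Real.cos (ξ / 2) ^ 2 - 1 := by
      have := Real.cos_two_mul (ξ / 2)
      rw [show 2 * (ξ / 2) = ξ by ring] at this
      linarith
    rw [hc, sinc_eq_half ξ]
    ring
  · refine ⟨2, by norm_num, fun ξ hξ => ?_⟩
    have h1 := abs_sinc_le_one ξ
    have h2 := abs_sinc_le_one (ξ / 2)
    have h3 := abs_mul_sinc_le ξ
    have h4 : |ξ * sinc (ξ / 2)| ≤ 2 := by
      have := abs_mul_sinc_le (ξ / 2)
      rw [show ξ * sinc (ξ / 2) = 2 * (ξ / 2 * sinc (ξ / 2)) by ring, abs_mul]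
      rw [abs_of_pos (by norm_num : (0:ℝ) < 2)]
      linarith
    have hc : |Real.cos (ξ / 2)| ≤ 1 := Real.abs_cos_le_one _
    have hsub := abs_sinc_sub_one ξ hξ
    refine ⟨?_, ?_, ?_, ?_, ?_⟩
    · rw [show ξ * (1 / 2 * (sinc ξ * sinc (ξ / 2))) =
        1 / 2 * ((ξ * sinc ξ) * sinc (ξ / 2)) by ring, abs_mul, abs_mul]
      rw [abs_of_pos (by norm_num : (0:ℝ) < 1/2)]
      nlinarith [abs_nonneg (ξ * sinc ξ), abs_nonneg (sinc (ξ / 2))]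
    · rw [show ξ ^ 2 * (1 / 2 * (sinc ξ * sinc (ξ / 2))) =
        1 / 2 * ((ξ * sinc ξ) * (ξ * sinc (ξ / 2))) by ring, abs_mul, abs_mul]
      rw [abs_of_pos (by norm_num : (0:ℝ) < 1/2)]
      nlinarith [abs_nonneg (ξ * sinc ξ), abs_nonneg (ξ * sinc (ξ / 2))]
    · rw [show 1 / 2 * (sinc ξ * sinc (ξ / 2)) - 1 / 2 * sinc (ξ / 2) =
        1 / 2 * (sinc (ξ / 2) * (sinc ξ - 1)) by ring, abs_mul, abs_mul]
      rw [abs_of_pos (by norm_num : (0:ℝ) < 1/2)]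
      rcases le_or_gt ξ 1 with h | h
      · have : |sinc ξ - 1| ≤ 2 * ξ := by nlinarith
        nlinarith [abs_nonneg (sinc ξ - 1), abs_nonneg (sinc (ξ / 2))]
      · have habs : |sinc ξ - 1| ≤ 2 := by
          have := abs_sub (sinc ξ) 1
          rw [abs_one] at this
          linarith
        nlinarith [abs_nonneg (sinc ξ - 1), abs_nonneg (sinc (ξ / 2))]
    · rw [show ξ * (sinc ξ * Real.cos (ξ / 2)) = (ξ * sinc ξ) * Real.cos (ξ / 2) by ring,
        abs_mul]
      nlinarith [abs_nonneg (ξ * sinc ξ), abs_nonneg (Real.cos (ξ / 2))]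
    · rw [show sinc ξ * Real.cos (ξ / 2) - Real.cos (ξ / 2) =
        Real.cos (ξ / 2) * (sinc ξ - 1) by ring, abs_mul]
      nlinarith [abs_nonneg (sinc ξ - 1), abs_nonneg (Real.cos (ξ / 2))]
  · rintro ⟨c, hc⟩
    obtain ⟨ξ, hξ0, hξnz, hξ⟩ := hunb c
    exact absurd (hc ξ hξ0 hξnz) (not_le.mpr hξ)
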